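/- arXiv:2211.05768 — 7 statements merged into one kernel-verified Lean document; each statement's English description precedes it below -/
import Mathlib

section
/- A 2-step nilpotent Lie algebra n is non-singular (i.e. ad(X): n → z is surjective for every X ∉ z) if and only if for some (equivalently, every) inner product on n, the map j(Z): v → v is invertible for every nonzero Z in the center z. -/
open LinearMap (BilinForm)

section Aux

variable {n : Type*} [AddCommGroup n] [Module ℝ n] [FiniteDimensional ℝ n]

/-- A positive-definite symmetric bilinear form exists. -/
noncomputable def myB : n →ₗ[ℝ] n →ₗ[ℝ] ℝ :=
  ∑ i, ((Module.finBasis ℝ n).coord i).smulRight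
       ((Module.finBasis ℝ n).coord i)

lemma myB_apply (x y : n) :
    myB x y = ∑ i, (Module.finBasis ℝ n).repr x i *
      (Module.finBasis ℝ n).repr y i := by
  simp [myB, LinearMap.sum_apply, Module.Basis.coord_apply]

lemma myB_symm (x y : n) : myB x y = myB y x := by
  simp_rw [myB_apply, mul_comm]

lemma myB_pos (x : n) (hx : x ≠ 0) : 0 < myB x x := by
  rw [myB_apply]
  have h : ∃ i, (Module.finBasis ℝ n).repr x i ≠ 0 := by
    by_contra h
    push_neg at h
    apply hx
    have : (Module.finBasis ℝ n).repr x = 0 := by ext i; exact h i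
    simpa using congrArg ((Module.finBasis ℝ n).repr.symm) this
  obtain ⟨i, hi⟩ := h
  have : 0 < (Module.finBasis ℝ n).repr x i * (Module.finBasis ℝ n).repr x i :=
    mul_self_pos.mpr hi
  exact Finset.sum_pos' (fun j _ => mul_self_nonneg _) ⟨i, Finset.mem_univ i, this⟩

end Aux

section Key

variable {n : Type*} [LieRing n] [LieAlgebra ℝ n] [FiniteDimensional ℝ n]

lemma key_decomp (B : BilinForm ℝ n) (hsym : ∀ x y : n, B x y = B y x)
    (hpos : ∀ x : n, x ≠ 0 → 0 < B x x) (W : Submodule ℝ n) (x : n) :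
    ∃ y ∈ W, ∃ w ∈ B.orthogonal W, x = y + w := by
  have hrefl : B.IsRefl := fun a b h => by rw [hsym]; exact h
  have hnd : (B.restrict W).Nondegenerate := by
    refine (LinearMap.IsRefl.nondegenerate_iff_separatingLeft (B := B.restrict W) (fun a b h => hrefl (a : n) b h)).mpr ?_
    intro m hm
    by_contra hne
    have h1 : (m : n) ≠ 0 := fun h => hne (Subtype.ext h)
    have := hpos m h1
    have h2 := hm m
    simp only [LinearMap.BilinForm.restrict_apply, LinearMap.domRestrict_apply] at h2
    rw [h2] at this; exact lt_irrefl 0 this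
  have hcompl := LinearMap.BilinForm.isCompl_orthogonal_of_restrict_nondegenerate
    (B := B) (W := W) hrefl hnd
  have hx : x ∈ W ⊔ B.orthogonal W := by rw [hcompl.sup_eq_top]; trivial
  obtain ⟨y, hy, w, hw, hyw⟩ := Submodule.mem_sup.mp hx
  exact ⟨y, hy, w, hw, hyw.symm⟩

lemma key (h2step : ∀ u v w : n, ⁅⁅u, v⁆, w⁆ = 0)
    (z : Submodule ℝ n) (hz : ∀ x : n, x ∈ z ↔ ∀ y : n, ⁅x, y⁆ = 0)
    (B : n →ₗ[ℝ] n →ₗ[ℝ] ℝ) (hsym : ∀ x y : n, B x y = B y x)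
    (hpos : ∀ x : n, x ≠ 0 → 0 < B x x) :
    (∀ X : n, X ∉ z → ∀ Z ∈ z, ∃ Y : n, ⁅X, Y⁆ = Z) ↔
      (∀ Z ∈ z, Z ≠ 0 → ∀ V : n, (∀ Z' ∈ z, B V Z' = 0) → V ≠ 0 →
        ∃ W : n, (∀ Z' ∈ z, B W Z' = 0) ∧ B Z ⁅V, W⁆ ≠ 0) := by
  constructor
  · intro hns Z hZ hZne V hV hVne
    have hVz : V ∉ z := by
      intro hVz
      have : B V V = 0 := hV V hVz
      exact (hpos V hVne).ne' this
    obtain ⟨Y, hY⟩ := hns V hVz Z hZ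
    obtain ⟨Zy, hZy, W, hW, hYeq⟩ := key_decomp B hsym hpos z Y
    refine ⟨W, ?_, ?_⟩
    · intro Z' hZ'
      rw [hsym]
      exact hW Z' hZ'
    · have hlie : ⁅V, W⁆ = Z := by
        have hc : ⁅V, Zy⁆ = 0 := by
          rw [← lie_skew]
          rw [(hz Zy).mp hZy V, neg_zero]
        rw [hYeq, lie_add, hc, zero_add] at hY
        exact hY
      rw [hlie]
      exact (hpos Z hZne).ne'
  · intro hcond X hX Z hZ
    set f : n →ₗ[ℝ] n :=
      { toFun := fun y => ⁅X, y⁆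
        map_add' := lie_add X
        map_smul' := fun c y => lie_smul c X y } with hf
    have hRz : LinearMap.range f ≤ z := by
      rintro _ ⟨y, rfl⟩
      exact (hz _).mpr fun w => h2step X y w
    by_contra hZR
    have hZR' : Z ∉ LinearMap.range f := by
      intro h
      obtain ⟨y, hy⟩ := h
      exact hZR ⟨y, hy⟩
    obtain ⟨r, hr, Z₀, hZ₀, hZeq⟩ := key_decomp B hsym hpos (LinearMap.range f) Z
    have hZ₀ne : Z₀ ≠ 0 := by
      intro h
      rw [h, add_zero] at hZeq
      exact hZR' (hZeq ▸ hr)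
    have hZ₀z : Z₀ ∈ z := by
      have : Z₀ = Z - r := by rw [hZeq]; abel
      rw [this]
      exact z.sub_mem hZ (hRz hr)
    obtain ⟨Zx, hZx, V, hVo, hXeq⟩ := key_decomp B hsym hpos z X
    have hVne : V ≠ 0 := by
      intro h
      rw [h, add_zero] at hXeq
      exact hX (hXeq ▸ hZx)
    have hV : ∀ Z' ∈ z, B V Z' = 0 := fun Z' hZ' => by
      rw [hsym]; exact hVo Z' hZ'
    obtain ⟨W, hWperp, hBne⟩ := hcond Z₀ hZ₀z hZ₀ne V hV hVne
    apply hBne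
    have hlie : ⁅V, W⁆ ∈ LinearMap.range f := by
      refine ⟨W, ?_⟩
      show ⁅X, W⁆ = ⁅V, W⁆
      rw [hXeq, add_lie, (hz Zx).mp hZx W, zero_add]
    rw [hsym]
    exact hZ₀ _ hlie

end Key

/-- A 2-step nilpotent real Lie algebra `n` with center `z` is non-singular
(`ad X : n → z` surjective for every `X ∉ z`) if and only if for every
(equivalently, for some) inner product `B` on `n`, the map `j(Z) : v → v`
(where `v` is the `B`-orthogonal complement of `z`) is invertible for every
nonzero `Z ∈ z`.  Invertibility of the skew-symmetric map `j(Z)` on the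
finite-dimensional space `v` is expressed as injectivity:
for every nonzero `V ∈ v` there is `W ∈ v` with `⟪j(Z)V, W⟫ = B Z ⁅V,W⁆ ≠ 0`. -/
theorem stmt_2 {n : Type*} [LieRing n] [LieAlgebra ℝ n] [FiniteDimensional ℝ n]
    (h2step : ∀ u v w : n, ⁅⁅u, v⁆, w⁆ = 0)
    (z : Submodule ℝ n) (hz : ∀ x : n, x ∈ z ↔ ∀ y : n, ⁅x, y⁆ = 0) :
    ((∀ X : n, X ∉ z → ∀ Z ∈ z, ∃ Y : n, ⁅X, Y⁆ = Z) ↔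
      (∀ B : n →ₗ[ℝ] n →ₗ[ℝ] ℝ, (∀ x y : n, B x y = B y x) →
        (∀ x : n, x ≠ 0 → 0 < B x x) →
        ∀ Z ∈ z, Z ≠ 0 → ∀ V : n, (∀ Z' ∈ z, B V Z' = 0) → V ≠ 0 →
          ∃ W : n, (∀ Z' ∈ z, B W Z' = 0) ∧ B Z ⁅V, W⁆ ≠ 0)) ∧
    ((∀ X : n, X ∉ z → ∀ Z ∈ z, ∃ Y : n, ⁅X, Y⁆ = Z) ↔
      (∃ B : n →ₗ[ℝ] n →ₗ[ℝ] ℝ, (∀ x y : n, B x y = B y x) ∧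
        (∀ x : n, x ≠ 0 → 0 < B x x) ∧
        ∀ Z ∈ z, Z ≠ 0 → ∀ V : n, (∀ Z' ∈ z, B V Z' = 0) → V ≠ 0 →
          ∃ W : n, (∀ Z' ∈ z, B W Z' = 0) ∧ B Z ⁅V, W⁆ ≠ 0)) := by
  constructor
  · constructor
    · intro hns B hsym hpos
      exact (key h2step z hz B hsym hpos).mp hns
    · intro h
      exact (key h2step z hz myB myB_symm myB_pos).mpr (h myB myB_symm myB_pos)
  · constructor
    · intro hns
      exact ⟨myB, myB_symm, myB_pos, (key h2step z hz myB myB_symm myB_pos).mp hns⟩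
    · rintro ⟨B, hsym, hpos, h⟩
      exact (key h2step z hz B hsym hpos).mpr h
end

section
/- If a 2-step nilpotent metric Lie algebra n admits a non-degenerate closed 2-form ω (a symplectic form), then the skew-symmetric Lorentz force F of ω has nonzero type-II component; equivalently, n admits a nonzero skew-symmetric map F₂ with F₂(v) ⊆ z, F₂(z) ⊆ v whose associated 2-form is closed and nonzero on z × n. -/
open scoped RealInnerProductSpace

/-- If a (non-abelian) 2-step nilpotent metric Lie algebra `n = v ⊕ z` admits a
non-degenerate closed 2-form (a symplectic form `ω = ⟪F·,·⟫` with `F` skew-symmetric and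
invertible), then `n` admits a nonzero skew-symmetric map `F₂` of type II
(`F₂(v) ⊆ z`, `F₂(z) ⊆ v`) whose associated 2-form is closed and nonzero on `z × n`. -/
theorem stmt_8 {n : Type*} [LieRing n] [LieAlgebra ℝ n]
    [NormedAddCommGroup n] [InnerProductSpace ℝ n] [@FiniteDimensional ℝ n _ (NormedAddCommGroup.toAddCommGroup (E := n)) (InnerProductSpace.toNormedSpace (𝕜 := ℝ) (E := n)).toModule]
    (h2step : ∀ u v w : n, ⁅⁅u, v⁆, w⁆ = 0)
    (hna : ∃ u v : n, ⁅u, v⁆ ≠ 0)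
    (z : @Submodule ℝ n _ (NormedAddCommGroup.toAddCommGroup (E := n)).toAddCommMonoid (InnerProductSpace.toNormedSpace (𝕜 := ℝ) (E := n)).toModule) (hz : ∀ x : n, x ∈ z ↔ ∀ y : n, ⁅x, y⁆ = 0)
    (hsymp : ∃ F : @LinearMap ℝ ℝ _ _ (RingHom.id ℝ) n n (NormedAddCommGroup.toAddCommGroup (E := n)).toAddCommMonoid (NormedAddCommGroup.toAddCommGroup (E := n)).toAddCommMonoid (InnerProductSpace.toNormedSpace (𝕜 := ℝ) (E := n)).toModule (InnerProductSpace.toNormedSpace (𝕜 := ℝ) (E := n)).toModule, (∀ x y : n, ⟪F x, y⟫ = -⟪x, F y⟫) ∧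
      Function.Bijective F ∧
      ∀ U V W : n, ⟪F ⁅U, V⁆, W⟫ + ⟪F ⁅V, W⁆, U⟫ + ⟪F ⁅W, U⁆, V⟫ = 0) :
    ∃ F₂ : @LinearMap ℝ ℝ _ _ (RingHom.id ℝ) n n (NormedAddCommGroup.toAddCommGroup (E := n)).toAddCommMonoid (NormedAddCommGroup.toAddCommGroup (E := n)).toAddCommMonoid (InnerProductSpace.toNormedSpace (𝕜 := ℝ) (E := n)).toModule (InnerProductSpace.toNormedSpace (𝕜 := ℝ) (E := n)).toModule, (∀ x y : n, ⟪F₂ x, y⟫ = -⟪x, F₂ y⟫) ∧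
      (∀ x ∈ zᗮ, F₂ x ∈ z) ∧ (∀ x ∈ z, F₂ x ∈ zᗮ) ∧
      (∀ U V W : n, ⟪F₂ ⁅U, V⁆, W⟫ + ⟪F₂ ⁅V, W⁆, U⟫ + ⟪F₂ ⁅W, U⁆, V⟫ = 0) ∧
      (∃ Z ∈ z, ∃ U : n, ⟪F₂ Z, U⟫ ≠ 0) := by
  letI : AddCommGroup n := NormedAddCommGroup.toAddCommGroup
  obtain ⟨F, hskew, hbij, hclosed⟩ := hsymp
  have hL0 : ∀ a : n, ⁅a, a⁆ = 0 := by
    intro a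
    have hc : ∀ b : n, ⟪F ⁅b, b⁆, b⟫ = 0 := fun b => by have := hclosed b b b; linarith
    have he : ∀ b : n, ⁅b, b⁆ = ⁅a, a⁆ := fun b => by rw [lie_self, lie_self]
    have hF : F ⁅a, a⁆ = 0 := by
      have := hc (F ⁅a, a⁆)
      rw [he] at this
      exact inner_self_eq_zero.mp this
    exact hbij.1 (by rw [hF, map_zero])
  have h0 := (lie_self (0 : n)).symm.trans (hL0 0)
  -- orthogonal projection onto z, as an endomorphism of n
  set P : n →ₗ[ℝ] n :=
    z.subtype ∘ₗ (z.orthogonalProjectionOnto : n →L[ℝ] z).toLinearMap with hPdef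
  have hPmem : ∀ x : n, P x ∈ z := fun x => (z.orthogonalProjectionOnto x).2
  have hPsa : ∀ x y : n, ⟪P x, y⟫ = ⟪x, P y⟫ := fun x y =>
    z.inner_starProjection_left_eq_right x y
  have hPself : ∀ x ∈ z, P x = x := fun x hx => by
    have := z.orthogonalProjectionOnto_mem_subspace_eq_self (⟨x, hx⟩ : z)
    simpa [hPdef] using congrArg (Submodule.subtype z) this
  have hPzero : ∀ x ∈ zᗮ, P x = 0 := fun x hx => by
    simpa [hPdef] using congrArg (Submodule.subtype z)
      (Submodule.orthogonalProjectionOnto_apply_of_mem_orthogonal hx)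
  have hPorth : ∀ x : n, x - P x ∈ zᗮ := fun x =>
    z.sub_starProjection_mem_orthogonal x
  -- brackets are central
  have hcen : ∀ U V : n, ⁅U, V⁆ ∈ z := fun U V => (hz _).mpr (fun y => h2step U V y)
  -- F of a bracket is orthogonal to z
  have hFz : ∀ (U V w : n), w ∈ z → ⟪F ⁅U, V⁆, w⟫ = 0 := by
    intro U V w hw
    have h00 := h2step V V V
    rw [lie_self] at h00
    rw [@zero_lie n n _ LieRing.toAddCommGroup lieRingSelfModule V] at h00
    have h1 : ⁅V, w⁆ = 0 := by
      rw [← lie_skew, (hz w).mp hw V, ← h00]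
      rw [← h0]
      exact @neg_zero n (@SubNegZeroMonoid.toNegZeroClass n
        (@SubtractionMonoid.toSubNegZeroMonoid n (@SubtractionCommMonoid.toSubtractionMonoid n
          (@AddCommGroup.toDivisionAddCommMonoid n LieRing.toAddCommGroup))))
    have h2 : ⁅w, U⁆ = 0 := ((hz w).mp hw U).trans h0
    have := hclosed U V w
    rw [h1, h2] at this
    simpa using this
  refine ⟨P ∘ₗ F ∘ₗ (LinearMap.id - P) + (LinearMap.id - P) ∘ₗ F ∘ₗ P, ?_, ?_, ?_, ?_, ?_⟩
  · -- skew-symmetry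
    intro x y
    simp only [LinearMap.add_apply, LinearMap.comp_apply, LinearMap.sub_apply,
      LinearMap.id_apply, inner_add_left, inner_add_right]
    rw [hPsa (F (x - P x)) y, hskew (x - P x) (P y)]
    have : ⟪F (P x) - P (F (P x)), y⟫ = ⟪F (P x), y - P y⟫ := by
      rw [inner_sub_left, inner_sub_right, hPsa (F (P x)) y]
    rw [this, hskew (P x) (y - P y)]
    have hsub : ∀ a b : n, ⟪a - P a, F b⟫ = ⟪a, F b - P (F b)⟫ := by
      intro a b
      rw [inner_sub_left, inner_sub_right, hPsa a (F b)]
    rw [hsub x (P y), inner_sub_right x]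
    have : ⟪P x, F (y - P y)⟫ = ⟪x, P (F (y - P y))⟫ := hPsa x (F (y - P y))
    rw [this]
    ring
  · -- maps zᗮ to z
    intro x hx
    simp only [LinearMap.add_apply, LinearMap.comp_apply, LinearMap.sub_apply,
      LinearMap.id_apply, hPzero x hx, map_zero, sub_zero]
    simpa using hPmem (F x)
  · -- maps z to zᗮ
    intro x hx
    simp only [LinearMap.add_apply, LinearMap.comp_apply, LinearMap.sub_apply,
      LinearMap.id_apply, hPself x hx, sub_self, map_zero, zero_add]
    exact hPorth (F x)
  · -- closedness
    intro U V W
    have key : ∀ A B C : n,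
        ⟪((P ∘ₗ F ∘ₗ (LinearMap.id - P) + (LinearMap.id - P) ∘ₗ F ∘ₗ P : n →ₗ[ℝ] n)) ⁅A, B⁆, C⟫
          = ⟪F ⁅A, B⁆, C⟫ := by
      intro A B C
      simp only [LinearMap.add_apply, LinearMap.comp_apply, LinearMap.sub_apply,
        LinearMap.id_apply, hPself _ (hcen A B), sub_self, map_zero, zero_add]
      rw [inner_sub_left, hPsa (F ⁅A, B⁆) C, hFz A B (P C) (hPmem C)]
      ring
    rw [key U V W, key V W U, key W U V]
    exact hclosed U V W
  · -- nonvanishing on z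
    obtain ⟨u, v, huv⟩ := hna
    refine ⟨⁅u, v⁆, hcen u v, F ⁅u, v⁆, ?_⟩
    have hFmem : F ⁅u, v⁆ ∈ zᗮ := by
      intro w hw
      rw [real_inner_comm]
      exact hFz u v w hw
    have hFne : F ⁅u, v⁆ ≠ 0 := fun h => huv ((hbij.1 (by simpa using h : F ⁅u, v⁆ = F 0)).trans h0.symm)
    simp only [LinearMap.add_apply, LinearMap.comp_apply, LinearMap.sub_apply,
      LinearMap.id_apply, hPself _ (hcen u v), sub_self, map_zero, zero_add,
      hPzero _ hFmem, sub_zero]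
    exact fun h => hFne (inner_self_eq_zero.mp h)
end

section
/- On a 2-step nilpotent Lie algebra n with nontrivial commutator, a skew-symmetric endomorphism F of type I (preserving the orthogonal splitting v ⊕ z) whose 2-form is closed is never invertible; hence no Lorentz force of type I induces a symplectic form. -/
open scoped RealInnerProductSpace

/-- On a 2-step nilpotent metric Lie algebra `n = v ⊕ z` with nontrivial commutator,
a skew-symmetric endomorphism `F` of type I (preserving the orthogonal splitting
`v ⊕ z`) whose associated 2-form `⟪F·,·⟫` is closed is never invertible; hence no
Lorentz force of type I induces a symplectic form. -/
theorem stmt_9 {n : Type*} [LieRing n] [LieAlgebra ℝ n]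
    [NormedAddCommGroup n] [InnerProductSpace ℝ n] [FiniteDimensional ℝ n]
    (h2step : ∀ u v w : n, ⁅⁅u, v⁆, w⁆ = 0)
    (hna : ∃ u v : n, ⁅u, v⁆ ≠ 0)
    (z : @Submodule ℝ n _ NormedAddCommGroup.toAddCommGroup.toAddCommMonoid
      InnerProductSpace.toNormedSpace.toModule) (hz : ∀ x : n, x ∈ z ↔ ∀ y : n, ⁅x, y⁆ = 0)
    (F : @LinearMap ℝ ℝ _ _ (RingHom.id ℝ) n n
      NormedAddCommGroup.toAddCommGroup.toAddCommMonoid NormedAddCommGroup.toAddCommGroup.toAddCommMonoid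
      InnerProductSpace.toNormedSpace.toModule InnerProductSpace.toNormedSpace.toModule) (hskew : ∀ x y : n, ⟪F x, y⟫ = -⟪x, F y⟫)
    (hFv : ∀ x ∈ zᗮ, F x ∈ zᗮ) (hFz : ∀ x ∈ z, F x ∈ z)
    (hclosed : ∀ U V W : n, ⟪F ⁅U, V⁆, W⟫ + ⟪F ⁅V, W⁆, U⟫ + ⟪F ⁅W, U⁆, V⟫ = 0) :
    ¬ Function.Bijective F := by
  obtain ⟨u, v, huv⟩ := hna
  intro hF
  have hkey : ∀ y : n, ⟪F ⁅u, u⁆, y⟫ = 0 := by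
    intro y
    have e : ⁅y, y⁆ = ⁅u, u⁆ := by rw [lie_self, lie_self]
    have := hclosed y y y
    rw [e] at this
    linarith
  have hFuu := inner_self_eq_zero.mp (hkey (F ⁅u, u⁆))
  have hFN : ∀ y : n, ⟪F ((0 : z) : n), y⟫ = 0 := by
    intro y
    rw [hskew]
    exact neg_eq_zero.mpr (inner_zero_left _)
  have hFN0 := inner_self_eq_zero.mp (hFN (F ((0 : z) : n)))
  have hLN := hF.injective (hFuu.trans hFN0.symm)
  have h0eq := (lie_self u).symm.trans (hLN.trans (inner_self_eq_zero.mp (inner_zero_left _ : ⟪((0 : z) : n), ((0 : z) : n)⟫ = 0)))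
  have hF0L := hFuu
  rw [lie_self] at hF0L
  have hzuv : ⁅u, v⁆ ∈ z := (hz _).2 fun w => h2step u v w
  have hFuv : F ⁅u, v⁆ ∈ z := hFz _ hzuv
  have horth : ∀ Z ∈ z, ⟪F ⁅u, v⁆, Z⟫ = 0 := by
    intro Z hZ
    have h0 : ∀ y : n, ⁅Z, y⁆ = 0 := (hz Z).1 hZ
    have h00 := (h0 Z).symm.trans (LieRing.lie_self Z)
    have h1 : ⁅v, Z⁆ = (0 : n) := by
      rw [← lie_skew, h0 v, h00]
      exact @neg_zero n (@SubNegZeroMonoid.toNegZeroClass n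
        (@SubtractionMonoid.toSubNegZeroMonoid n
          (@SubtractionCommMonoid.toSubtractionMonoid n
            (@AddCommGroup.toDivisionAddCommMonoid n LieRing.toAddCommGroup))))
    have h2 : ⁅Z, u⁆ = (0 : n) := h0 u
    have := hclosed u v Z
    rw [h1, h2, hF0L, inner_zero_left, inner_zero_left, add_zero, add_zero] at this
    exact this
  have hzero : F ⁅u, v⁆ = 0 := by
    have := horth _ hFuv
    exact (inner_self_eq_zero.mp this).trans h0eq.symm
  apply huv
  have : F ⁅u, v⁆ = F 0 := by rw [hzero, hF0L, h0eq]
  exact hF.injective this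
end

section
/- If n is a non-singular 2-step nilpotent Lie algebra, then every closed 2-form ω on n satisfies ω(Z,Z') = 0 for all Z, Z' in the center z. -/
/-- If `n` is a non-singular (non-abelian) 2-step nilpotent Lie algebra
(`ad X : n → z` surjective for every `X` outside the center `z`), then every closed
2-form `ω` on `n` satisfies `ω(Z,Z') = 0` for all `Z, Z'` in the center. -/
theorem stmt_11 {n : Type*} [LieRing n] [LieAlgebra ℝ n] [FiniteDimensional ℝ n]
    (h2step : ∀ u v w : n, ⁅⁅u, v⁆, w⁆ = 0)
    (hna : ∃ u v : n, ⁅u, v⁆ ≠ 0)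
    (hns : ∀ X : n, ¬(∀ y : n, ⁅X, y⁆ = 0) →
      ∀ Z : n, (∀ y : n, ⁅Z, y⁆ = 0) → ∃ Y : n, ⁅X, Y⁆ = Z)
    (ω : n →ₗ[ℝ] n →ₗ[ℝ] ℝ) (halt : ∀ x : n, ω x x = 0)
    (hclosed : ∀ U V W : n, ω ⁅U, V⁆ W + ω ⁅V, W⁆ U + ω ⁅W, U⁆ V = 0) :
    ∀ Z : n, (∀ y : n, ⁅Z, y⁆ = 0) → ∀ Z' : n, (∀ y : n, ⁅Z', y⁆ = 0) →
      ω Z Z' = 0 := by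
  intro Z hZ Z' hZ'
  obtain ⟨u, v, huv⟩ := hna
  have hu : ¬(∀ y : n, ⁅u, y⁆ = 0) := fun h => huv (h v)
  obtain ⟨Y, hY⟩ := hns u hu Z hZ
  have h := hclosed u Y Z'
  rw [hY, hZ' u, show ⁅Y, Z'⁆ = 0 by rw [← neg_eq_zero, ← lie_skew]; simp [hZ' Y]] at h
  simpa using h
end

section
/- Let n be a non-singular 2-step nilpotent Lie algebra with dim n > 3·dim z. Then every closed 2-form ω on n satisfies ω(Z,U) = 0 for all Z ∈ z and all U ∈ n. -/
open Module

/-- Let `n` be a non-singular 2-step nilpotent Lie algebra with center `z` and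
`dim n > 3 · dim z`.  Then every closed 2-form `ω` on `n` satisfies `ω(Z,U) = 0`
for all `Z ∈ z` and all `U ∈ n`. -/
theorem stmt_12 {n : Type*} [LieRing n] [LieAlgebra ℝ n] [FiniteDimensional ℝ n]
    (h2step : ∀ u v w : n, ⁅⁅u, v⁆, w⁆ = 0)
    (z : Submodule ℝ n) (hz : ∀ x : n, x ∈ z ↔ ∀ y : n, ⁅x, y⁆ = 0)
    (hns : ∀ X : n, X ∉ z → ∀ Z ∈ z, ∃ Y : n, ⁅X, Y⁆ = Z)
    (hdim : 3 * Module.finrank ℝ z < Module.finrank ℝ n)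
    (ω : n →ₗ[ℝ] n →ₗ[ℝ] ℝ) (halt : ∀ x : n, ω x x = 0)
    (hclosed : ∀ U V W : n, ω ⁅U, V⁆ W + ω ⁅V, W⁆ U + ω ⁅W, U⁆ V = 0) :
    ∀ Z ∈ z, ∀ U : n, ω Z U = 0 := by
  intro Z hZ W
  have hzne : ∃ X : n, X ∉ z := by
    by_contra h
    push_neg at h
    have hzt : z = ⊤ := Submodule.eq_top_iff'.mpr h
    rw [hzt, finrank_top] at hdim
    omega
  by_cases hW : W ∈ z
  · -- case W central
    obtain ⟨X, hX⟩ := hzne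
    obtain ⟨Y, hY⟩ := hns X hX Z hZ
    have hc := hclosed X Y W
    have h1 : ⁅Y, W⁆ = (0 : n) := by
      rw [← neg_neg (⁅Y, W⁆ : n), lie_skew, (hz W).mp hW Y, neg_zero]
    have h2 : ⁅W, X⁆ = (0 : n) := (hz W).mp hW X
    rw [hY, h1, h2] at hc
    simpa using hc
  · -- case W not central
    have hbz : ∀ x y : n, ⁅x, y⁆ ∈ z := fun x y => (hz _).mpr (fun w => h2step x y w)
    let φ : n →ₗ[ℝ] z :=
      { toFun := fun v => ⟨⁅W, v⁆, hbz W v⟩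
        map_add' := fun a b => by ext; simp
        map_smul' := fun c a => by ext; simp }
    have hφsurj : Function.Surjective φ := by
      rintro ⟨Z', hZ'⟩
      obtain ⟨Y, hY⟩ := hns W hW Z' hZ'
      exact ⟨Y, Subtype.ext hY⟩
    set K : Submodule ℝ n := LinearMap.ker φ with hKdef
    have hmemK : ∀ v : n, v ∈ K ↔ ⁅W, v⁆ = 0 := by
      intro v
      constructor
      · intro hv
        exact congrArg Subtype.val (LinearMap.mem_ker.mp hv)
      · intro hv
        exact LinearMap.mem_ker.mpr (Subtype.ext hv)
    have hKdim : finrank ℝ K + finrank ℝ z = finrank ℝ n := by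
      have h := LinearMap.finrank_range_add_finrank_ker φ
      rw [LinearMap.range_eq_top.mpr hφsurj, finrank_top, ← hKdef] at h
      omega
    set S : Submodule ℝ n :=
      Submodule.span ℝ {x : n | ∃ U ∈ K, ∃ V ∈ K, ⁅U, V⁆ = x} with hSdef
    have hzS : z ≤ S := by
      by_contra hcon
      obtain ⟨Z₁, hZ₁z, hZ₁S⟩ := SetLike.not_le_iff_exists.mp hcon
      -- get a functional vanishing on S but not on Z₁
      have hq : (Submodule.Quotient.mk Z₁ : n ⧸ S) ≠ 0 := by
        simpa [Submodule.Quotient.mk_eq_zero] using hZ₁S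
      obtain ⟨f, hf⟩ : ∃ f : Module.Dual ℝ (n ⧸ S), f (Submodule.Quotient.mk Z₁) ≠ 0 := by
        by_contra hcf
        push_neg at hcf
        exact hq ((Module.forall_dual_apply_eq_zero_iff ℝ _).mp hcf)
      set ξ : Module.Dual ℝ n := f.comp S.mkQ with hξdef
      have hξS : ∀ s ∈ S, ξ s = 0 := by
        intro s hs
        have : S.mkQ s = 0 := by simpa [Submodule.mkQ_apply, Submodule.Quotient.mk_eq_zero] using hs
        simp [hξdef, this]
      have hξZ₁ : ξ Z₁ ≠ 0 := hf
      -- the map Θ : K → Dual n, u ↦ ξ ⁅u, ·⁆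
      let Θ : K →ₗ[ℝ] Module.Dual ℝ n :=
        { toFun := fun u =>
            { toFun := fun v => ξ ⁅(u : n), v⁆
              map_add' := fun a b => by simp
              map_smul' := fun c a => by simp }
          map_add' := fun a b => by ext v; simp [add_lie]
          map_smul' := fun c a => by ext v; simp [smul_lie] }
      -- kernel of Θ embeds into z
      have hker : ∀ u : K, Θ u = 0 → (u : n) ∈ z := by
        intro u hu
        by_contra hu'
        obtain ⟨Y, hY⟩ := hns (u : n) hu' Z₁ hZ₁z
        have : ξ ⁅(u : n), Y⁆ = 0 := by
          have := congrArg (fun g => g Y) hu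
          simpa [Θ] using this
        rw [hY] at this
        exact hξZ₁ this
      let j : (LinearMap.ker Θ) →ₗ[ℝ] z :=
        { toFun := fun u => ⟨((u : K) : n), hker u (LinearMap.mem_ker.mp u.2)⟩
          map_add' := fun a b => by ext; simp
          map_smul' := fun c a => by ext; simp }
      have hjinj : Function.Injective j := by
        intro a b hab
        have h1 : ((a : K) : n) = ((b : K) : n) := by
          have := congrArg Subtype.val hab
          simpa [j] using this
        exact Subtype.ext (Subtype.ext h1)
      have hkerle : finrank ℝ (LinearMap.ker Θ) ≤ finrank ℝ z :=
        LinearMap.finrank_le_finrank_of_injective hjinj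
      -- range of Θ lies in the annihilator of K
      have hrangele : LinearMap.range Θ ≤ K.dualAnnihilator := by
        rintro g ⟨u, rfl⟩
        rw [Submodule.mem_dualAnnihilator]
        intro v hv
        have hgen : ⁅(u : n), v⁆ ∈ S :=
          Submodule.subset_span ⟨(u : n), u.2, v, hv, rfl⟩
        simpa [Θ] using hξS _ hgen
      have hann : finrank ℝ K.dualAnnihilator + finrank ℝ K = finrank ℝ n := by
        rw [← (Subspace.quotEquivAnnihilator K).finrank_eq]
        exact Submodule.finrank_quotient_add_finrank K
      have hrk : finrank ℝ (LinearMap.range Θ) ≤ finrank ℝ K.dualAnnihilator :=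
        Submodule.finrank_mono hrangele
      have hrkK : finrank ℝ (LinearMap.range Θ) + finrank ℝ (LinearMap.ker Θ)
          = finrank ℝ K := LinearMap.finrank_range_add_finrank_ker Θ
      omega
    -- now conclude: Z ∈ S and ω vanishes on S against W
    have hZS : Z ∈ S := hzS hZ
    refine Submodule.span_induction ?_ ?_ ?_ ?_ hZS
    · rintro x ⟨U, hU, V, hV, rfl⟩
      have hc := hclosed U V W
      have h1 : ⁅V, W⁆ = (0 : n) := by
        rw [← neg_neg (⁅V, W⁆ : n), lie_skew, (hmemK V).mp hV, neg_zero]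
      have h2 : ⁅W, U⁆ = (0 : n) := (hmemK U).mp hU
      rw [h1, h2] at hc
      simpa using hc
    · simp
    · intro x y _ _ hx hy
      simp [hx, hy]
    · intro c x _ hx
      simp [hx]
end

section
/- A non-singular 2-step nilpotent Lie algebra n with dim n > 3·dim z admits no symplectic form: any closed 2-form on n is degenerate. -/
/-- A non-singular 2-step nilpotent Lie algebra `n` with center `z` and
`dim n > 3 · dim z` admits no symplectic form: every closed 2-form on `n` is
degenerate. -/
theorem stmt_13 {n : Type*} [LieRing n] [LieAlgebra ℝ n] [FiniteDimensional ℝ n]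
    (h2step : ∀ u v w : n, ⁅⁅u, v⁆, w⁆ = 0)
    (z : Submodule ℝ n) (hz : ∀ x : n, x ∈ z ↔ ∀ y : n, ⁅x, y⁆ = 0)
    (hns : ∀ X : n, X ∉ z → ∀ Z ∈ z, ∃ Y : n, ⁅X, Y⁆ = Z)
    (hdim : 3 * Module.finrank ℝ z < Module.finrank ℝ n) :
    ∀ ω : n →ₗ[ℝ] n →ₗ[ℝ] ℝ, (∀ x : n, ω x x = 0) →
      (∀ U V W : n, ω ⁅U, V⁆ W + ω ⁅V, W⁆ U + ω ⁅W, U⁆ V = 0) →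
      ∃ X : n, X ≠ 0 ∧ ∀ Y : n, ω X Y = 0 := by
  intro ω halt hclosed
  by_contra hcon
  push_neg at hcon
  have hnd : ∀ X : n, (∀ Y : n, ω X Y = 0) → X = 0 := by
    intro X hX
    by_contra hX0
    obtain ⟨Y, hY⟩ := hcon X hX0
    exact hY (hX Y)
  have hskew : ∀ x y : n, ω x y = - ω y x := by
    intro x y
    have h := halt (x + y)
    simp only [map_add, LinearMap.add_apply, halt x, halt y] at h
    linarith
  have hbz : ∀ u v : n, ⁅u, v⁆ ∈ z := fun u v => (hz _).mpr fun y => h2step u v y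
  set d := Module.finrank ℝ n with hd
  set m := Module.finrank ℝ z with hm
  -- m ≥ 1
  have hm1 : 0 < m := by
    rcases Nat.eq_zero_or_pos m with h0 | h
    · exfalso
      have hzbot : z = ⊥ := Submodule.finrank_eq_zero.mp (by rw [← hm]; exact h0)
      have hztop : z = ⊤ := by
        rw [Submodule.eq_top_iff']
        intro x
        rw [hz]
        intro y
        have := hbz x y
        rw [hzbot] at this
        simpa using this
      have : m = d := by rw [hm, hztop]; exact finrank_top ℝ n
      omega
    · exact h
  -- the map restricting ω to z in the second variable
  set ψ : n →ₗ[ℝ] (↥z →ₗ[ℝ] ℝ) := (ω.flip.comp z.subtype).flip with hψ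
  set K : Submodule ℝ n := LinearMap.ker ψ with hKdef
  have hK : ∀ x : n, x ∈ K ↔ ∀ v : n, v ∈ z → ω x v = 0 := by
    intro x
    constructor
    · intro hx v hv
      have : ψ x = 0 := hx
      have := congrFun (congrArg DFunLike.coe this) ⟨v, hv⟩
      simpa [hψ] using this
    · intro hx
      show ψ x = 0
      ext ⟨v, hv⟩
      simpa [hψ] using hx v hv
  -- dim K ≥ d - m
  have hrank : Module.finrank ℝ (LinearMap.range ψ) + Module.finrank ℝ K = d :=
    LinearMap.finrank_range_add_finrank_ker ψ
  have hrange_le : Module.finrank ℝ (LinearMap.range ψ) ≤ m := by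
    have h1 : Module.finrank ℝ (LinearMap.range ψ) ≤ Module.finrank ℝ (↥z →ₗ[ℝ] ℝ) :=
      Submodule.finrank_le _
    have h2 : Module.finrank ℝ (↥z →ₗ[ℝ] ℝ) = m := Subspace.dual_finrank_eq
    omega
  have hKge : d - m ≤ Module.finrank ℝ K := by omega
  -- K is abelian
  have habel : ∀ u v : n, u ∈ K → v ∈ K → ⁅u, v⁆ = 0 := by
    intro u v hu hv
    apply hnd
    intro w
    have h := hclosed u v w
    have h1 : ω ⁅v, w⁆ u = 0 := by
      rw [hskew]
      rw [(hK u).mp hu ⁅v, w⁆ (hbz v w)]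
      ring
    have h2 : ω ⁅w, u⁆ v = 0 := by
      rw [hskew]
      rw [(hK v).mp hv ⁅w, u⁆ (hbz w u)]
      ring
    linarith
  -- K ≠ ⊤
  have hKne : K ≠ ⊤ := by
    intro htop
    obtain ⟨v, hvz, hv0⟩ := (Submodule.ne_bot_iff z).mp (by
      intro hb
      rw [hb] at hm
      simp [hm] at hm1)
    apply hv0
    apply hnd
    intro y
    rw [hskew]
    have : y ∈ K := htop ▸ Submodule.mem_top
    rw [(hK y).mp this v hvz]
    ring
  obtain ⟨w₀, hw₀⟩ : ∃ w₀ : n, w₀ ∉ K := by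
    by_contra hall
    push_neg at hall
    exact hKne (Submodule.eq_top_iff'.mpr hall)
  -- key: X ∈ K with ⁅X, w₀⁆ = 0 implies X ∈ z
  have hker : ∀ X : n, X ∈ K → ⁅X, w₀⁆ = 0 → X ∈ z := by
    intro X hXK hXw
    by_contra hXz
    -- ad X as a map to z
    set fX : n →ₗ[ℝ] ↥z := LinearMap.codRestrict z
      { toFun := fun y => ⁅X, y⁆,
        map_add' := fun a b => lie_add X a b,
        map_smul' := fun c a => by simp } (fun y => hbz X y) with hfX
    have hsurj : Function.Surjective fX := by
      rintro ⟨Z, hZ⟩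
      obtain ⟨Y, hY⟩ := hns X hXz Z hZ
      exact ⟨Y, Subtype.ext hY⟩
    have hrangeX : LinearMap.range fX = ⊤ := LinearMap.range_eq_top.mpr hsurj
    have hrkX : Module.finrank ℝ (LinearMap.range fX) + Module.finrank ℝ (LinearMap.ker fX) = d :=
      LinearMap.finrank_range_add_finrank_ker fX
    have hrangeXm : Module.finrank ℝ (LinearMap.range fX) = m := by
      rw [hrangeX]
      exact finrank_top ℝ ↥z
    have hKle : K ≤ LinearMap.ker fX := by
      intro k hk
      show fX k = 0
      exact Subtype.ext (habel X k hXK hk)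
    have hKeq : K = LinearMap.ker fX :=
      Submodule.eq_of_le_of_finrank_le hKle (by omega)
    apply hw₀
    rw [hKeq]
    show fX w₀ = 0
    exact Subtype.ext hXw
  -- the bracket with w₀ as a map K → z
  set β : n →ₗ[ℝ] n :=
    { toFun := fun x => ⁅x, w₀⁆,
      map_add' := fun a b => add_lie a b w₀,
      map_smul' := fun c a => by simp } with hβ
  set g : ↥K →ₗ[ℝ] ↥z :=
    LinearMap.codRestrict z (β.comp K.subtype) (fun c => hbz (c : n) w₀) with hg
  have hrkg : Module.finrank ℝ (LinearMap.range g) + Module.finrank ℝ (LinearMap.ker g) =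
      Module.finrank ℝ K := LinearMap.finrank_range_add_finrank_ker g
  have hrg_le : Module.finrank ℝ (LinearMap.range g) ≤ m := Submodule.finrank_le _
  -- ker g embeds in z
  have hkg_le : Module.finrank ℝ (LinearMap.ker g) ≤ m := by
    have hmem : ∀ c : LinearMap.ker g, ((c : ↥K) : n) ∈ z := by
      rintro ⟨⟨x, hxK⟩, hc⟩
      apply hker x hxK
      have : g ⟨x, hxK⟩ = 0 := hc
      exact congrArg Subtype.val this
    set χ : ↥(LinearMap.ker g) →ₗ[ℝ] ↥z := LinearMap.codRestrict z
      (K.subtype.comp (LinearMap.ker g).subtype) hmem with hχ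
    have hinj : Function.Injective χ := by
      intro a b hab
      exact Subtype.ext (Subtype.ext (congrArg (Subtype.val : ↥z → n) hab))
    exact LinearMap.finrank_le_finrank_of_injective hinj
  omega
end

section
/- The 6-dimensional real Lie algebra h₂(ℝ) ⊕ ℝ (trivial one-dimensional extension of the 5-dimensional Heisenberg algebra) admits no symplectic form: every closed 2-form on it is degenerate. -/
/-- The 6-dimensional real Lie algebra `h₂(ℝ) ⊕ ℝ` (basis `e₁,…,e₆`, nonzero brackets
`⁅e₁,e₂⁆ = ⁅e₃,e₄⁆ = e₅`) admits no symplectic form: every closed 2-form on it is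
degenerate. -/
theorem stmt_18 {h : Type*} [LieRing h] [LieAlgebra ℝ h]
    (b : Module.Basis (Fin 6) ℝ h)
    (h01 : ⁅b 0, b 1⁆ = b 4) (h23 : ⁅b 2, b 3⁆ = b 4)
    (h02 : ⁅b 0, b 2⁆ = 0) (h03 : ⁅b 0, b 3⁆ = 0)
    (h12 : ⁅b 1, b 2⁆ = 0) (h13 : ⁅b 1, b 3⁆ = 0)
    (hc4 : ∀ x : h, ⁅b 4, x⁆ = 0) (hc5 : ∀ x : h, ⁅b 5, x⁆ = 0) :
    ∀ ω : h →ₗ[ℝ] h →ₗ[ℝ] ℝ, (∀ x : h, ω x x = 0) →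
      (∀ U V W : h, ω ⁅U, V⁆ W + ω ⁅V, W⁆ U + ω ⁅W, U⁆ V = 0) →
      ∃ X : h, X ≠ 0 ∧ ∀ Y : h, ω X Y = 0 := by
  intro ω halt hcl
  refine ⟨b 4, b.ne_zero 4, ?_⟩
  have h30 : ⁅b 3, b 0⁆ = 0 := by rw [← lie_skew, h03, neg_zero]
  have h31 : ⁅b 3, b 1⁆ = 0 := by rw [← lie_skew, h13, neg_zero]
  have h20 : ⁅b 2, b 0⁆ = 0 := by rw [← lie_skew, h02, neg_zero]
  have h15 : ⁅b 1, b 5⁆ = 0 := by rw [← lie_skew, hc5, neg_zero]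
  have key : ∀ i : Fin 6, ω (b 4) (b i) = 0 := by
    intro i
    fin_cases i
    · have := hcl (b 2) (b 3) (b 0)
      simpa [h23, h30, h02] using this
    · have := hcl (b 2) (b 3) (b 1)
      simpa [h23, h31, h12] using this
    · have := hcl (b 0) (b 1) (b 2)
      simpa [h01, h12, h20] using this
    · have := hcl (b 0) (b 1) (b 3)
      simpa [h01, h13, h30] using this
    · exact halt (b 4)
    · have := hcl (b 0) (b 1) (b 5)
      simpa [h01, h15, hc5] using this
  have hz : ω (b 4) = 0 := b.ext fun i => by simpa using key i
  intro Y
  rw [hz]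
  rfl
end
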